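/- Fix a symmetric positive definite m×m real matrix R with unit diagonal. Then the map ℝ^m → ℝ^m sending u to the diagonal (K(u)_{11},…,K(u)_{mm}) of the marginal kernel K(u) := L(u)(L(u) + I)^{-1} is injective. (This is the well-definedness of the mixed parameterization ω = (η_{\{1\}},…,η_{\{m\}}; u^{α₂}) of the determinantal point process model: given the pairwise parameters, the item-wise parameters u are in one-to-one correspondence with the diagonal marginal probabilities.) -/

import Mathlib

open Matrix Finset Equiv.Perm Equiv

/-- The kernel `L(u) = D(u) R D(u)` with `D(u) = diag(e^{u₁/2}, …, e^{u_m/2})`. -/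
noncomputable def Lmat {m : ℕ} (R : Matrix (Fin m) (Fin m) ℝ) (u : Fin m → ℝ) :
    Matrix (Fin m) (Fin m) ℝ :=
  Matrix.diagonal (fun i => Real.exp (u i / 2)) * R *
    Matrix.diagonal (fun i => Real.exp (u i / 2))

/-- The marginal kernel `K(u) = L(u)(L(u) + I)⁻¹`. -/
noncomputable def Kmat {m : ℕ} (R : Matrix (Fin m) (Fin m) ℝ) (u : Fin m → ℝ) :
    Matrix (Fin m) (Fin m) ℝ :=
  Lmat R u * (Lmat R u + 1)⁻¹

noncomputable def minor {m : ℕ} (A : Matrix (Fin m) (Fin m) ℝ) (S : Finset (Fin m)) : ℝ :=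
  (A.submatrix (fun x : {x // x ∈ S} => (x : Fin m)) (fun x : {x // x ∈ S} => (x : Fin m))).det

lemma fix_mem_iff {m : ℕ} {T : Finset (Fin m)} {σ : Equiv.Perm (Fin m)}
    (h : ∀ j ∉ T, σ j = j) : ∀ x, x ∈ T ↔ σ x ∈ T := by
  intro x
  constructor
  · intro hx
    by_contra hσx
    have h2 : σ x = x := σ.injective (h (σ x) hσx)
    rw [← h2] at hx
    exact hσx hx
  · intro hσx
    by_contra hx
    rw [h x hx] at hσx
    exact hx hσx

lemma inner_sum_eq_minor {m : ℕ} (A : Matrix (Fin m) (Fin m) ℝ) (T : Finset (Fin m)) :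
    (∑ σ ∈ Finset.univ.filter (fun σ : Equiv.Perm (Fin m) => ∀ j ∉ T, σ j = j),
      Equiv.Perm.sign σ • ∏ j ∈ T, A (σ j) j) = minor A T := by
  rw [minor, det_apply]
  refine Finset.sum_bij'
    (i := fun σ hσ => σ.subtypePerm (fun x => (fix_mem_iff (Finset.mem_filter.mp hσ).2 x).symm))
    (j := fun τ _ => Equiv.Perm.ofSubtype τ) ?_ ?_ ?_ ?_ ?_
  · intro σ hσ; exact Finset.mem_univ _
  · intro τ _
    refine Finset.mem_filter.mpr ⟨Finset.mem_univ _, fun j hj => ?_⟩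
    exact Equiv.Perm.ofSubtype_apply_of_not_mem τ hj
  · intro σ hσ
    exact Equiv.Perm.ofSubtype_subtypePerm _ fun x hx => by
      by_contra hxT
      exact hx ((Finset.mem_filter.mp hσ).2 x hxT)
  · intro τ _
    exact Equiv.Perm.subtypePerm_ofSubtype τ
  · intro σ hσ
    have h2 : ∀ x, σ x ≠ x → x ∈ T := fun x hx => by
      by_contra hxT; exact hx ((Finset.mem_filter.mp hσ).2 x hxT)
    have hsign : Equiv.Perm.sign (σ.subtypePerm (fun x => (fix_mem_iff (Finset.mem_filter.mp hσ).2 x).symm)) =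
        Equiv.Perm.sign σ := by
      convert Equiv.Perm.sign_subtypePerm σ (fun x => (fix_mem_iff (Finset.mem_filter.mp hσ).2 x).symm) h2 using 3
    rw [hsign]
    congr 1
    rw [← Finset.prod_coe_sort T (fun j => A (σ j) j)]
    rfl

lemma det_one_add_sum_minors {m : ℕ} (A : Matrix (Fin m) (Fin m) ℝ) :
    (1 + A).det = ∑ S : Finset (Fin m), minor A S := by
  rw [det_apply]
  have hterm : ∀ σ : Equiv.Perm (Fin m), ∏ j, (1 + A) (σ j) j
      = ∑ T ∈ (univ : Finset (Fin m)).powerset,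
          (∏ j ∈ T, A (σ j) j) * ∏ j ∈ univ \ T, (1 : Matrix (Fin m) (Fin m) ℝ) (σ j) j := by
    intro σ
    rw [← Finset.prod_add]
    exact Finset.prod_congr rfl fun j _ => by simp [Matrix.add_apply, add_comm]
  simp only [hterm, Finset.smul_sum]
  rw [Finset.sum_comm]
  rw [Finset.powerset_univ]
  refine Finset.sum_congr rfl fun T _ => ?_
  have hone : ∀ σ : Equiv.Perm (Fin m),
      (∏ j ∈ univ \ T, (1 : Matrix (Fin m) (Fin m) ℝ) (σ j) j)
        = if ∀ j ∉ T, σ j = j then 1 else 0 := by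
    intro σ
    by_cases h : ∀ j ∉ T, σ j = j
    · rw [if_pos h]
      refine Finset.prod_eq_one fun j hj => ?_
      rw [Finset.mem_sdiff] at hj
      simp [h j hj.2, Matrix.one_apply]
    · rw [if_neg h]
      push_neg at h
      obtain ⟨j, hj, hne⟩ := h
      refine Finset.prod_eq_zero (by simp [Finset.mem_sdiff, hj] : j ∈ univ \ T) ?_
      simp [Matrix.one_apply, hne]
  simp only [hone, mul_ite, mul_one, mul_zero, smul_ite, smul_zero]
  rw [← Finset.sum_filter]
  exact inner_sum_eq_minor A T

lemma posdef_minor {m : ℕ} {R : Matrix (Fin m) (Fin m) ℝ} (hR : R.PosDef) (S : Finset (Fin m)) :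
    0 < minor R S := by
  refine Matrix.PosDef.det_pos (Matrix.PosDef.of_dotProduct_mulVec_pos (hR.1.submatrix _) fun ⦃x⦄ hx => ?_)
  set y : Fin m → ℝ := fun j => if h : j ∈ S then x ⟨j, h⟩ else 0 with hy
  have hyne : y ≠ 0 := by
    intro h0
    apply hx
    funext a
    have := congrFun h0 (a : Fin m)
    simpa [hy, a.2] using this
  have key : dotProduct (star x)
      ((R.submatrix (fun a : {z // z ∈ S} => (a : Fin m)) (fun a : {z // z ∈ S} => (a : Fin m))) *ᵥ x)
      = dotProduct (star y) (R *ᵥ y) := by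
    simp only [star_trivial, dotProduct, Matrix.mulVec, dotProduct, Matrix.submatrix_apply]
    have houter : (∑ j, y j * ∑ k, R j k * y k) = ∑ j ∈ S, y j * ∑ k, R j k * y k := by
      refine (Finset.sum_subset (Finset.subset_univ S) fun j _ hj => ?_).symm
      simp [hy, hj]
    rw [houter, ← Finset.sum_coe_sort S (fun j => y j * ∑ k, R j k * y k)]
    refine Finset.sum_congr rfl fun a _ => ?_
    have hya : y (a : Fin m) = x a := by simp [hy, a.2]
    rw [hya]
    congr 1
    have hinner : (∑ k, R (a : Fin m) k * y k) = ∑ k ∈ S, R (a : Fin m) k * y k := by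
      refine (Finset.sum_subset (Finset.subset_univ S) fun k _ hk => ?_).symm
      simp [hy, hk]
    rw [hinner, ← Finset.sum_coe_sort S (fun k => R (a : Fin m) k * y k)]
    refine Finset.sum_congr rfl fun b _ => ?_
    simp [hy, b.2]
  rw [key]
  exact hR.dotProduct_mulVec_pos hyne

lemma det_updateColumn_of_row_single {m : ℕ} (M : Matrix (Fin m) (Fin m) ℝ) (i : Fin m)
    (hrow : ∀ j, M i j = (Pi.single i 1 : Fin m → ℝ) j) :
    (M.updateCol i (Pi.single i 1)).det = M.det := by
  rw [Matrix.det_apply, Matrix.det_apply]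
  refine Finset.sum_congr rfl fun σ _ => ?_
  by_cases hσ : σ i = i
  · congr 1
    refine Finset.prod_congr rfl fun j _ => ?_
    by_cases hj : j = i
    · subst hj
      rw [Matrix.updateCol_apply, if_pos rfl, hσ, hrow]
    · rw [Matrix.updateCol_apply, if_neg hj]
  · have hj0 : σ.symm i ≠ i := fun h => hσ (by conv_lhs => rw [← h, Equiv.apply_symm_apply])
    have h1 : M (σ (σ.symm i)) (σ.symm i) = 0 := by
      rw [Equiv.apply_symm_apply, hrow, Pi.single_apply, if_neg hj0]
    have h2 : (M.updateCol i (Pi.single i 1)) (σ (σ.symm i)) (σ.symm i) = 0 := by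
      rw [Matrix.updateCol_apply, if_neg hj0, h1]
    have hz1 : (∏ j, M (σ j) j) = 0 :=
      Finset.prod_eq_zero (Finset.mem_univ (σ.symm i)) h1
    have hz2 : (∏ j, (M.updateCol i (Pi.single i 1)) (σ j) j) = 0 :=
      Finset.prod_eq_zero (Finset.mem_univ (σ.symm i)) h2
    rw [hz1, hz2]

lemma adjugate_diag_eq {m : ℕ} (L : Matrix (Fin m) (Fin m) ℝ) (i : Fin m) :
    (L + 1).adjugate i i
      = ∑ S ∈ Finset.univ.filter (fun S : Finset (Fin m) => i ∉ S), minor L S := by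
  rw [Matrix.adjugate_apply]
  set M' := (L + 1).updateRow i (Pi.single i 1) with hM'
  have hrow : ∀ j, M' i j = (Pi.single i 1 : Fin m → ℝ) j := fun j => by
    simp [hM', Matrix.updateRow_self]
  rw [← det_updateColumn_of_row_single M' i hrow]
  set L' : Matrix (Fin m) (Fin m) ℝ :=
    Matrix.of (fun j k => if j = i ∨ k = i then 0 else L j k) with hL'
  have hML : M'.updateCol i (Pi.single i 1) = 1 + L' := by
    ext a b
    have ha' : ∀ x : Fin m, (i = x) ↔ (x = i) := fun x => eq_comm
    by_cases hb : b = i <;> by_cases ha : a = i <;>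
      simp [hM', hL', Matrix.updateCol_apply, Matrix.updateRow_apply,
        Matrix.one_apply, Matrix.add_apply, Pi.single_apply, ha, hb, ha', add_comm]
  rw [hML, det_one_add_sum_minors]
  rw [← Finset.sum_filter_add_sum_filter_not Finset.univ
    (fun S : Finset (Fin m) => i ∉ S) (fun S => minor L' S)]
  have h2 : ∑ S ∈ Finset.univ.filter (fun S : Finset (Fin m) => ¬ i ∉ S), minor L' S = 0 := by
    refine Finset.sum_eq_zero fun S hS => ?_
    have hiS : i ∈ S := by
      have := (Finset.mem_filter.mp hS).2
      simpa using this
    exact Matrix.det_eq_zero_of_row_eq_zero ⟨i, hiS⟩ fun k => by simp [hL']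
  rw [h2, add_zero]
  refine Finset.sum_congr rfl fun S hS => ?_
  have hiS : i ∉ S := (Finset.mem_filter.mp hS).2
  unfold minor
  congr 1
  ext a b
  have ha : (a : Fin m) ≠ i := fun h => hiS (h ▸ a.2)
  have hb : (b : Fin m) ≠ i := fun h => hiS (h ▸ b.2)
  simp [hL', ha, hb]

lemma minor_Lmat {m : ℕ} (R : Matrix (Fin m) (Fin m) ℝ) (u : Fin m → ℝ) (S : Finset (Fin m)) :
    minor (Lmat R u) S = Real.exp (∑ j ∈ S, u j) * minor R S := by
  have hsub : (Lmat R u).submatrix (fun a : {z // z ∈ S} => (a : Fin m))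
        (fun a : {z // z ∈ S} => (a : Fin m))
      = Matrix.diagonal (fun a : {z // z ∈ S} => Real.exp (u a / 2))
        * (R.submatrix (fun a : {z // z ∈ S} => (a : Fin m)) (fun a : {z // z ∈ S} => (a : Fin m)))
        * Matrix.diagonal (fun a : {z // z ∈ S} => Real.exp (u a / 2)) := by
    ext a b
    simp [Lmat, Matrix.mul_diagonal, Matrix.diagonal_mul]
  rw [minor, hsub, Matrix.det_mul, Matrix.det_mul, Matrix.det_diagonal]
  have hprod : (∏ a : {z // z ∈ S}, Real.exp (u a / 2)) = Real.exp ((∑ j ∈ S, u j) / 2) := by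
    rw [← Real.exp_sum]
    congr 1
    rw [Finset.sum_div, ← Finset.sum_coe_sort S (fun j => u j / 2)]
  rw [hprod, minor]
  rw [show Real.exp ((∑ j ∈ S, u j) / 2) *
      (R.submatrix (fun a : {z // z ∈ S} => (a : Fin m)) (fun a : {z // z ∈ S} => (a : Fin m))).det *
      Real.exp ((∑ j ∈ S, u j) / 2)
    = (Real.exp ((∑ j ∈ S, u j) / 2) * Real.exp ((∑ j ∈ S, u j) / 2)) *
      (R.submatrix (fun a : {z // z ∈ S} => (a : Fin m)) (fun a : {z // z ∈ S} => (a : Fin m))).det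
    from by ring, ← Real.exp_add, add_halves]

lemma Kmat_diag {m : ℕ} {R : Matrix (Fin m) (Fin m) ℝ} (hR : R.PosDef) (u : Fin m → ℝ) (i : Fin m) :
    Kmat R u i i
      = (∑ S ∈ Finset.univ.filter (fun S : Finset (Fin m) => i ∈ S), minor (Lmat R u) S)
        / (∑ S : Finset (Fin m), minor (Lmat R u) S) := by
  set L := Lmat R u with hLdef
  have hdet : (L + 1).det = ∑ S : Finset (Fin m), minor L S := by
    rw [add_comm]; exact det_one_add_sum_minors L
  have hpos : ∀ S : Finset (Fin m), 0 < minor L S := fun S => by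
    rw [hLdef, minor_Lmat]; exact mul_pos (Real.exp_pos _) (posdef_minor hR S)
  have hZ : 0 < ∑ S : Finset (Fin m), minor L S :=
    Finset.sum_pos (fun S _ => hpos S) ⟨∅, Finset.mem_univ _⟩
  have hdetpos : 0 < (L + 1).det := by rw [hdet]; exact hZ
  have hsplit : (∑ S : Finset (Fin m), minor L S)
      = (∑ S ∈ Finset.univ.filter (fun S : Finset (Fin m) => i ∈ S), minor L S)
        + (L + 1).adjugate i i := by
    rw [adjugate_diag_eq]
    rw [← Finset.sum_filter_add_sum_filter_not Finset.univ
      (fun S : Finset (Fin m) => i ∈ S) (fun S => minor L S)]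
  have hK : Kmat R u i i = ((L + 1).det)⁻¹ * ((L + 1).det - (L + 1).adjugate i i) := by
    rw [Kmat, Matrix.inv_def, Ring.inverse_eq_inv']
    have hmul : L * (((L + 1).det)⁻¹ • (L + 1).adjugate)
        = ((L + 1).det)⁻¹ • (L * (L + 1).adjugate) := by
      rw [Matrix.mul_smul]
    have hLadj : L * (L + 1).adjugate = (L + 1).det • (1 : Matrix (Fin m) (Fin m) ℝ)
        - (L + 1).adjugate := by
      have : L * (L + 1).adjugate = (L + 1) * (L + 1).adjugate - 1 * (L + 1).adjugate := by
        rw [← Matrix.sub_mul]; congr 1; exact (add_sub_cancel_right L 1).symm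
      rw [this, Matrix.mul_adjugate, Matrix.one_mul]
    rw [← hLdef, hmul, hLadj]
    simp [Matrix.smul_apply, Matrix.sub_apply, Matrix.one_apply, mul_sub]
  rw [hK, ← hdet]
  have : (L + 1).adjugate i i
      = (L+1).det - ∑ S ∈ Finset.univ.filter (fun S : Finset (Fin m) => i ∈ S), minor L S := by
    rw [hdet] at *; linarith [hsplit]
  rw [this]
  field_simp
  ring

lemma cheb {ι : Type*} [Fintype ι] (p X : ι → ℝ) (hp : ∀ i, 0 < p i)
    (i0 j0 : ι) (hne : X i0 ≠ X j0)
    (hkey : (∑ i, X i * (p i * Real.exp (X i))) * (∑ i, p i)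
      = (∑ i, X i * p i) * (∑ i, p i * Real.exp (X i))) : False := by
  set E : ι → ℝ := fun i => Real.exp (X i) with hE
  have hFnn : ∀ i j : ι, 0 ≤ (X i - X j) * (p i * p j * (E i - E j)) := by
    intro i j
    rcases le_total (X i) (X j) with h | h
    · have hE' : E i ≤ E j := Real.exp_le_exp.2 h
      have h1 := (hp i).le; have h2 := (hp j).le
      have heq : (X i - X j) * (p i * p j * (E i - E j))
          = (X j - X i) * ((p i * p j) * (E j - E i)) := by ring
      rw [heq]
      exact mul_nonneg (sub_nonneg.2 h)
        (mul_nonneg (mul_nonneg h1 h2) (sub_nonneg.2 hE'))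
    · have hE' : E j ≤ E i := Real.exp_le_exp.2 h
      have h1 := (hp i).le; have h2 := (hp j).le
      exact mul_nonneg (sub_nonneg.2 h)
        (mul_nonneg (mul_nonneg h1 h2) (sub_nonneg.2 hE'))
  have hFpos : 0 < (X i0 - X j0) * (p i0 * p j0 * (E i0 - E j0)) := by
    rcases lt_or_gt_of_ne hne with h | h
    · have hE' : E i0 < E j0 := Real.exp_lt_exp.2 h
      have h1 := hp i0; have h2 := hp j0
      have heq : (X i0 - X j0) * (p i0 * p j0 * (E i0 - E j0))
          = (X j0 - X i0) * ((p i0 * p j0) * (E j0 - E i0)) := by ring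
      rw [heq]
      exact mul_pos (sub_pos.2 h) (mul_pos (mul_pos h1 h2) (sub_pos.2 hE'))
    · have hE' : E j0 < E i0 := Real.exp_lt_exp.2 h
      have h1 := hp i0; have h2 := hp j0
      exact mul_pos (sub_pos.2 h) (mul_pos (mul_pos h1 h2) (sub_pos.2 hE'))
  have hQpos : 0 < ∑ i : ι, ∑ j : ι, (X i - X j) * (p i * p j * (E i - E j)) := by
    refine Finset.sum_pos' (fun i _ => Finset.sum_nonneg fun j _ => hFnn i j)
      ⟨i0, Finset.mem_univ _,
        Finset.sum_pos' (fun j _ => hFnn i0 j) ⟨j0, Finset.mem_univ _, hFpos⟩⟩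
  have hexpand : ∀ i j : ι, (X i - X j) * (p i * p j * (E i - E j))
      = (X i * (p i * E i)) * p j - (X i * p i) * (p j * E j)
        - (p i * E i) * (X j * p j) + p i * (X j * (p j * E j)) := fun i j => by ring
  have hQeq : (∑ i : ι, ∑ j : ι, (X i - X j) * (p i * p j * (E i - E j)))
      = 2 * ((∑ i, X i * (p i * E i)) * (∑ i, p i)
        - (∑ i, X i * p i) * (∑ i, p i * E i)) := by
    simp only [hexpand, Finset.sum_add_distrib, Finset.sum_sub_distrib, ← Finset.mul_sum,
      ← Finset.sum_mul]
    ring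
  rw [hQeq] at hQpos
  linarith

theorem mixed_parameterization_injective (m : ℕ)
    (R : Matrix (Fin m) (Fin m) ℝ) (hsymm : R.IsSymm) (hR : R.PosDef)
    (hdiag : ∀ i, R i i = 1) :
    Function.Injective (fun (u : Fin m → ℝ) => fun a : Fin m => Kmat R u a a) := by
  intro u v h
  by_contra hne
  have hex : ∃ i, u i - v i ≠ 0 := by
    by_contra hall
    push_neg at hall
    exact hne (funext fun i => by have := hall i; linarith)
  obtain ⟨i0, hi0⟩ := hex
  have haS : ∀ S : Finset (Fin m), minor (Lmat R u) S
      = minor (Lmat R v) S * Real.exp (∑ j ∈ S, (u j - v j)) := by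
    intro S
    rw [minor_Lmat, minor_Lmat]
    rw [show (∑ j ∈ S, u j) = (∑ j ∈ S, v j) + ∑ j ∈ S, (u j - v j) by
      rw [← Finset.sum_add_distrib]; exact Finset.sum_congr rfl fun j _ => by ring]
    rw [Real.exp_add]; ring
  have hppos : ∀ S, 0 < minor (Lmat R v) S := fun S => by
    rw [minor_Lmat]; exact mul_pos (Real.exp_pos _) (posdef_minor hR S)
  have hapos : ∀ S, 0 < minor (Lmat R u) S := fun S => by
    rw [minor_Lmat]; exact mul_pos (Real.exp_pos _) (posdef_minor hR S)
  have hPpos : 0 < ∑ S : Finset (Fin m), minor (Lmat R v) S :=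
    Finset.sum_pos (fun S _ => hppos S) ⟨∅, Finset.mem_univ _⟩
  have hApos : 0 < ∑ S : Finset (Fin m), minor (Lmat R u) S :=
    Finset.sum_pos (fun S _ => hapos S) ⟨∅, Finset.mem_univ _⟩
  have hmarg : ∀ i : Fin m,
      (∑ S ∈ Finset.univ.filter (fun S : Finset (Fin m) => i ∈ S), minor (Lmat R u) S)
          * (∑ S : Finset (Fin m), minor (Lmat R v) S)
        = (∑ S ∈ Finset.univ.filter (fun S : Finset (Fin m) => i ∈ S), minor (Lmat R v) S)
          * (∑ S : Finset (Fin m), minor (Lmat R u) S) := by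
    intro i
    have h1 : Kmat R u i i = Kmat R v i i := congrFun h i
    rw [Kmat_diag hR u i, Kmat_diag hR v i, div_eq_div_iff hApos.ne' hPpos.ne'] at h1
    exact h1
  have hswap : ∀ c : Finset (Fin m) → ℝ,
      (∑ i, (u i - v i) *
          ∑ S ∈ Finset.univ.filter (fun S : Finset (Fin m) => i ∈ S), c S)
        = ∑ S : Finset (Fin m), (∑ j ∈ S, (u j - v j)) * c S := by
    intro c
    have h1 : ∀ i : Fin m, (u i - v i) *
        ∑ S ∈ Finset.univ.filter (fun S : Finset (Fin m) => i ∈ S), c S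
        = ∑ S : Finset (Fin m), if i ∈ S then (u i - v i) * c S else 0 := by
      intro i
      rw [Finset.mul_sum, Finset.sum_filter]
    simp only [h1]
    rw [Finset.sum_comm]
    refine Finset.sum_congr rfl fun S _ => ?_
    rw [Finset.sum_ite_mem, Finset.univ_inter, ← Finset.sum_mul]
  have hkey : (∑ S : Finset (Fin m), (∑ j ∈ S, (u j - v j)) * minor (Lmat R u) S)
        * (∑ S : Finset (Fin m), minor (Lmat R v) S)
      = (∑ S : Finset (Fin m), (∑ j ∈ S, (u j - v j)) * minor (Lmat R v) S)
        * (∑ S : Finset (Fin m), minor (Lmat R u) S) := by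
    rw [← hswap (fun S => minor (Lmat R u) S), ← hswap (fun S => minor (Lmat R v) S)]
    rw [Finset.sum_mul, Finset.sum_mul]
    refine Finset.sum_congr rfl fun i _ => ?_
    rw [mul_assoc, mul_assoc, hmarg i]
  refine cheb (fun S : Finset (Fin m) => minor (Lmat R v) S)
    (fun S : Finset (Fin m) => ∑ j ∈ S, (u j - v j)) hppos {i0} ∅ ?_ ?_
  · simpa using hi0
  · rw [show (∑ S : Finset (Fin m), (∑ j ∈ S, (u j - v j)) *
        (minor (Lmat R v) S * Real.exp (∑ j ∈ S, (u j - v j))))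
      = ∑ S : Finset (Fin m), (∑ j ∈ S, (u j - v j)) * minor (Lmat R u) S from
        Finset.sum_congr rfl fun S _ => by rw [haS S]]
    rw [show (∑ S : Finset (Fin m), minor (Lmat R v) S * Real.exp (∑ j ∈ S, (u j - v j)))
      = ∑ S : Finset (Fin m), minor (Lmat R u) S from
        Finset.sum_congr rfl fun S _ => (haS S).symm]
    exact hkey
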